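/- arXiv:1603.05116 — 4 statements merged into one kernel-verified Lean document; each statement's English description precedes it below -/
import Mathlib

section
/- For integers n ≥ 2 and p ≥ 1, the Grundy domination number of the Sierpiński graph S_p^n satisfies the recursive upper bound γ_gr(S_p^n) ≤ p · γ_gr(S_p^{n-1}) + p(p-1)/2. -/
/-- The closed neighborhood `N[v] = {v} ∪ N(v)` of a vertex. -/
def closedNbhd {V : Type*} (G : SimpleGraph V) (v : V) : Set V :=
  insert v (G.neighborSet v)

/-- A sequence (list) of pairwise distinct vertices is legal if each vertex
footprints some vertex not dominated by the previous ones. -/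
def IsLegalSeq {V : Type*} (G : SimpleGraph V) (l : List V) : Prop :=
  l.Nodup ∧ ∀ i : Fin l.length, ∃ u,
    u ∈ closedNbhd G (l.get i) ∧
    ∀ j : Fin l.length, (j : ℕ) < (i : ℕ) → u ∉ closedNbhd G (l.get j)

/-- A legal dominating sequence. -/
def IsDomSeq {V : Type*} (G : SimpleGraph V) (l : List V) : Prop :=
  IsLegalSeq G l ∧ ∀ u : V, ∃ v ∈ l, u ∈ closedNbhd G v

/-- The Grundy domination number: the maximum length of a legal dominating sequence. -/
noncomputable def grundyDomNum {V : Type*} (G : SimpleGraph V) : ℕ :=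
  sSup {k : ℕ | ∃ l : List V, IsDomSeq G l ∧ l.length = k}

/-- The Sierpiński graph `S_p^n` on vertex set `{0,…,p-1}^n`: two distinct vertices
`u` and `v` are adjacent iff there is a coordinate `h` with `u t = v t` for `t < h`,
`u h ≠ v h`, and `u t = v h`, `v t = u h` for all `t > h`. -/
def sierpinskiGraph (p n : ℕ) : SimpleGraph (Fin n → Fin p) :=
  SimpleGraph.fromRel (fun u v => ∃ h : Fin n,
    (∀ t : Fin n, t < h → u t = v t) ∧ u h ≠ v h ∧
    (∀ t : Fin n, h < t → u t = v h ∧ v t = u h))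

variable {V : Type*} {G : SimpleGraph V}

lemma mem_closedNbhd_self (G : SimpleGraph V) (v : V) : v ∈ closedNbhd G v :=
  Set.mem_insert _ _

lemma mem_closedNbhd_iff {x y : V} : y ∈ closedNbhd G x ↔ y = x ∨ G.Adj x y := by
  simp [closedNbhd, SimpleGraph.mem_neighborSet]

lemma legal_append {l : List V} {u : V} (hl : IsLegalSeq G l)
    (hu : ∀ v ∈ l, u ∉ closedNbhd G v) : IsLegalSeq G (l ++ [u]) := by
  have hunl : u ∉ l := fun h => hu u h (mem_closedNbhd_self G u)
  constructor
  · rw [List.nodup_append]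
    exact ⟨hl.1, List.nodup_singleton u, by simp; intro a ha h; subst h; exact hunl ha⟩
  · intro i
    have hlen : (l ++ [u]).length = l.length + 1 := by simp
    by_cases hi : (i : ℕ) < l.length
    · obtain ⟨w, hw1, hw2⟩ := hl.2 ⟨i, hi⟩
      refine ⟨w, ?_, ?_⟩
      · have : (l ++ [u]).get i = l.get ⟨i, hi⟩ := by
          simp [List.getElem_append_left hi]
        rwa [this]
      · intro j hj
        have hjl : (j : ℕ) < l.length := lt_of_lt_of_le hj (Nat.le_of_lt_succ (by omega))
        have : (l ++ [u]).get j = l.get ⟨j, hjl⟩ := by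
          simp [List.getElem_append_left hjl]
        rw [this]
        exact hw2 ⟨j, hjl⟩ hj
    · have hieq : (i : ℕ) = l.length := by
        have := i.isLt; omega
      have hgi : (l ++ [u]).get i = u := by
        simp [List.get_eq_getElem, hieq, List.getElem_append_right (le_of_eq hieq.symm)]
      refine ⟨u, by rw [hgi]; exact mem_closedNbhd_self G u, ?_⟩
      intro j hj
      have hjl : (j : ℕ) < l.length := by omega
      have : (l ++ [u]).get j = l.get ⟨j, hjl⟩ := by
        simp [List.getElem_append_left hjl]
      rw [this]
      exact hu _ (List.get_mem l _)

open Classical in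
lemma exists_domSeq_extension [Fintype V] :
    ∀ (k : ℕ) (l : List V), IsLegalSeq G l →
      (Finset.univ.filter fun u => ∀ v ∈ l, u ∉ closedNbhd G v).card ≤ k →
      ∃ l', IsDomSeq G l' ∧ l.length ≤ l'.length := by
  classical
  intro k
  induction k with
  | zero =>
    intro l hl hc
    refine ⟨l, ⟨hl, ?_⟩, le_refl _⟩
    intro u
    by_contra hcon
    push_neg at hcon
    have : u ∈ Finset.univ.filter fun u => ∀ v ∈ l, u ∉ closedNbhd G v := by
      simp only [Finset.mem_filter, Finset.mem_univ, true_and]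
      exact hcon
    have := Finset.card_pos.mpr ⟨u, this⟩
    omega
  | succ k ih =>
    intro l hl hc
    by_cases hne : (Finset.univ.filter fun u => ∀ v ∈ l, u ∉ closedNbhd G v).Nonempty
    · obtain ⟨u, hu⟩ := hne
      simp only [Finset.mem_filter, Finset.mem_univ, true_and] at hu
      have hl' := legal_append hl hu
      have hsub : (Finset.univ.filter fun w => ∀ v ∈ l ++ [u], w ∉ closedNbhd G v) ⊆
          (Finset.univ.filter fun w => ∀ v ∈ l, w ∉ closedNbhd G v) \ {u} := by
        intro w hw
        simp only [Finset.mem_filter, Finset.mem_univ, true_and, List.mem_append,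
          List.mem_singleton, Finset.mem_sdiff, Finset.mem_singleton] at hw ⊢
        refine ⟨fun v hv => hw v (Or.inl hv), ?_⟩
        · rintro rfl
          exact hw w (Or.inr rfl) (mem_closedNbhd_self G w)
      have hcard : (Finset.univ.filter fun w => ∀ v ∈ l ++ [u], w ∉ closedNbhd G v).card ≤ k := by
        have h1 := Finset.card_le_card hsub
        have h2 : ((Finset.univ.filter fun w => ∀ v ∈ l, w ∉ closedNbhd G v) \ {u}).card =
            (Finset.univ.filter fun w => ∀ v ∈ l, w ∉ closedNbhd G v).card - 1 := by
          rw [Finset.card_sdiff_of_subset (by simpa using hu)]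
          simp
        omega
      obtain ⟨l', hl'', hlen⟩ := ih (l ++ [u]) hl' hcard
      exact ⟨l', hl'', by simp at hlen; omega⟩
    · rw [Finset.not_nonempty_iff_eq_empty] at hne
      refine ⟨l, ⟨hl, ?_⟩, le_refl _⟩
      intro u
      by_contra hcon
      push_neg at hcon
      have : u ∈ (∅ : Finset V) := by
        rw [← hne]
        simp only [Finset.mem_filter, Finset.mem_univ, true_and]
        exact hcon
      simp at this

lemma length_le_grundyDomNum [Fintype V] {l : List V} (hl : IsLegalSeq G l) :
    l.length ≤ grundyDomNum G := by
  classical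
  obtain ⟨l', hl', hlen⟩ := exists_domSeq_extension
    (Finset.univ.filter fun u => ∀ v ∈ l, u ∉ closedNbhd G v).card l hl (le_refl _)
  have hmem : l'.length ∈ {k : ℕ | ∃ l : List V, IsDomSeq G l ∧ l.length = k} :=
    ⟨l', hl', rfl⟩
  have hbdd : BddAbove {k : ℕ | ∃ l : List V, IsDomSeq G l ∧ l.length = k} := by
    refine ⟨Fintype.card V, fun k hk => ?_⟩
    obtain ⟨l'', hl'', rfl⟩ := hk
    exact List.Nodup.length_le_card hl''.1.1
  exact hlen.trans (le_csSup hbdd hmem)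

lemma sierpinski_adj {p n : ℕ} {x y : Fin n → Fin p} :
    (sierpinskiGraph p n).Adj x y ↔ x ≠ y ∧
      ((∃ h : Fin n, (∀ t : Fin n, t < h → x t = y t) ∧ x h ≠ y h ∧
        (∀ t : Fin n, h < t → x t = y h ∧ y t = x h)) ∨
       (∃ h : Fin n, (∀ t : Fin n, t < h → y t = x t) ∧ y h ≠ x h ∧
        (∀ t : Fin n, h < t → y t = x h ∧ x t = y h))) := by
  rw [sierpinskiGraph, SimpleGraph.fromRel_adj]

lemma cross_structure {p m : ℕ} {x y : Fin (m + 1) → Fin p}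
    (hadj : (sierpinskiGraph p (m + 1)).Adj x y) (h0 : x 0 ≠ y 0) :
    ∀ t : Fin (m + 1), t ≠ 0 → x t = y 0 ∧ y t = x 0 := by
  rw [sierpinski_adj] at hadj
  obtain ⟨-, hrel | hrel⟩ := hadj <;>
  · obtain ⟨h, h1, h2, h3⟩ := hrel
    have hh0 : h = 0 := by
      by_contra hne
      exact h0 (by have := h1 0 (Fin.pos_of_ne_zero hne); tauto)
    subst hh0
    intro t ht
    have := h3 t (Fin.pos_of_ne_zero ht)
    tauto

lemma tail_eq_iff {p m : ℕ} {x y : Fin (m + 1) → Fin p} (h0 : x 0 = y 0) :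
    x = y ↔ Fin.tail x = Fin.tail y := by
  constructor
  · intro h; rw [h]
  · intro h
    funext t
    refine Fin.cases h0 (fun s => ?_) t
    exact congrFun h s

lemma tail_adj_iff {p m : ℕ} {x y : Fin (m + 1) → Fin p} (h0 : x 0 = y 0) :
    (sierpinskiGraph p (m + 1)).Adj x y ↔
      (sierpinskiGraph p m).Adj (Fin.tail x) (Fin.tail y) := by
  have key : ∀ a b : Fin (m + 1) → Fin p, a 0 = b 0 →
      ((∃ h : Fin (m + 1), (∀ t, t < h → a t = b t) ∧ a h ≠ b h ∧
        (∀ t, h < t → a t = b h ∧ b t = a h)) ↔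
       (∃ h : Fin m, (∀ t, t < h → Fin.tail a t = Fin.tail b t) ∧
          Fin.tail a h ≠ Fin.tail b h ∧
        (∀ t, h < t → Fin.tail a t = Fin.tail b h ∧ Fin.tail b t = Fin.tail a h))) := by
    intro a b hab
    constructor
    · rintro ⟨h, h1, h2, h3⟩
      have hh : h ≠ 0 := by rintro rfl; exact h2 hab
      refine ⟨h.pred hh, fun t ht => ?_, ?_, fun t ht => ?_⟩
      · exact h1 t.succ (by rwa [← Fin.succ_pred h hh, Fin.succ_lt_succ_iff])
      · simpa [Fin.tail, Fin.succ_pred] using h2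
      · have := h3 t.succ (by rwa [← Fin.succ_pred h hh, Fin.succ_lt_succ_iff])
        simpa [Fin.tail, Fin.succ_pred] using this
    · rintro ⟨h, h1, h2, h3⟩
      refine ⟨h.succ, fun t ht => ?_, by simpa [Fin.tail] using h2, fun t ht => ?_⟩
      · refine Fin.cases (fun _ => hab)
          (fun s hs => h1 s (by rwa [Fin.succ_lt_succ_iff] at hs)) t ht
      · refine Fin.cases (fun hs => absurd hs (Fin.not_lt_zero _))
          (fun s hs => ?_) t ht
        have := h3 s (by rwa [Fin.succ_lt_succ_iff] at hs)
        simpa [Fin.tail] using this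
  rw [sierpinski_adj, sierpinski_adj]
  rw [key x y h0, key y x h0.symm]
  simp only [ne_eq, tail_eq_iff h0]

lemma closedNbhd_copy {p m : ℕ} {x y : Fin (m + 1) → Fin p} (h0 : x 0 = y 0) :
    y ∈ closedNbhd (sierpinskiGraph p (m + 1)) x ↔
      Fin.tail y ∈ closedNbhd (sierpinskiGraph p m) (Fin.tail x) := by
  rw [mem_closedNbhd_iff, mem_closedNbhd_iff, tail_adj_iff h0,
    tail_eq_iff h0.symm]

lemma isLegalSeq_ofFn {V : Type*} {G : SimpleGraph V} {k : ℕ} {f : Fin k → V}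
    (hinj : Function.Injective f)
    (h : ∀ a : Fin k, ∃ w, w ∈ closedNbhd G (f a) ∧
      ∀ b : Fin k, b < a → w ∉ closedNbhd G (f b)) :
    IsLegalSeq G (List.ofFn f) := by
  constructor
  · exact (List.nodup_ofFn).mpr hinj
  · intro i
    have hlen : (List.ofFn f).length = k := List.length_ofFn
    have hi : (i : ℕ) < k := by have := i.isLt; omega
    obtain ⟨w, hw1, hw2⟩ := h ⟨i, hi⟩
    have hget : ∀ (j : Fin (List.ofFn f).length) (hj : (j : ℕ) < k),
        (List.ofFn f).get j = f ⟨j, hj⟩ := by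
      intro j hj
      rw [List.get_ofFn]
      exact congrArg f (Fin.ext (by simp))
    refine ⟨w, by rw [hget i hi]; exact hw1, fun j hj => ?_⟩
    have hjk : (j : ℕ) < k := by have := j.isLt; omega
    rw [hget j hjk]
    exact hw2 ⟨j, hjk⟩ hj

theorem grundy_sierpinski_recursive_upper (p n : ℕ) (hp : 1 ≤ p) (hn : 2 ≤ n) :
    grundyDomNum (sierpinskiGraph p n) ≤
      p * grundyDomNum (sierpinskiGraph p (n - 1)) + p * (p - 1) / 2 := by
  classical
  obtain ⟨m, rfl⟩ : ∃ m, n = m + 1 := ⟨n - 1, by omega⟩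
  rw [Nat.add_sub_cancel]
  refine csSup_le' ?_
  rintro k ⟨l, hdom, rfl⟩
  have hl := hdom.1
  have hnodup : Function.Injective l.get := List.nodup_iff_injective_get.mp hl.1
  choose u hu1 hu2 using hl.2
  set G1 := sierpinskiGraph p (m + 1)
  set G0 := sierpinskiGraph p m
  set γ := grundyDomNum G0 with hγ
  -- cross structure for "bad" indices
  have hcross : ∀ i : Fin l.length, u i 0 ≠ l.get i 0 →
      ∀ t : Fin (m + 1), t ≠ 0 → l.get i t = u i 0 ∧ u i t = l.get i 0 := by
    intro i hne t ht
    have hadj : G1.Adj (l.get i) (u i) := by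
      rcases mem_closedNbhd_iff.mp (hu1 i) with h | h
      · exact absurd (congrFun h 0) hne
      · exact h
    exact cross_structure hadj (fun h => hne h.symm) t ht
  -- bound on bad indices
  have hB : (Finset.univ.filter fun i : Fin l.length => ¬ u i 0 = l.get i 0).card
      ≤ p * (p - 1) / 2 := by
    set B := Finset.univ.filter fun i : Fin l.length => ¬ u i 0 = l.get i 0 with hBdef
    have hmem : ∀ i ∈ B, ¬ u i 0 = l.get i 0 := by
      intro i hi; exact (Finset.mem_filter.mp hi).2
    have hmaps : ∀ i ∈ B, ({l.get i 0, u i 0} : Finset (Fin p)) ∈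
        Finset.univ.powersetCard 2 := by
      intro i hi
      rw [Finset.mem_powersetCard]
      refine ⟨Finset.subset_univ _, ?_⟩
      rw [Finset.card_pair (fun h => hmem i hi h.symm)]
    have hinj : Set.InjOn (fun i => ({l.get i 0, u i 0} : Finset (Fin p))) B := by
      intro i hi j hj hij
      simp only at hij
      by_contra hne
      have hpair := hij
      have hcases : (l.get j 0 = l.get i 0 ∧ u j 0 = u i 0) ∨
          (l.get j 0 = u i 0 ∧ u j 0 = l.get i 0) := by
        have h1 : l.get j 0 ∈ ({l.get i 0, u i 0} : Finset (Fin p)) := by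
          rw [hij]; exact Finset.mem_insert_self _ _
        have h2 : u j 0 ∈ ({l.get i 0, u i 0} : Finset (Fin p)) := by
          rw [hij]; exact Finset.mem_insert.mpr (Or.inr (Finset.mem_singleton_self _))
        simp only [Finset.mem_insert, Finset.mem_singleton] at h1 h2
        rcases h1 with h1 | h1 <;> rcases h2 with h2 | h2
        · exact absurd (h1 ▸ h2) (hmem j hj)
        · exact Or.inl ⟨h1, h2⟩
        · exact Or.inr ⟨h1, h2⟩
        · exact absurd (h2.trans h1.symm) (hmem j hj)
      rcases hcases with ⟨h1, h2⟩ | ⟨h1, h2⟩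
      · -- same copy heads ⇒ same vertex ⇒ i = j
        have : l.get j = l.get i := by
          funext t
          by_cases ht : t = 0
          · subst ht; exact h1
          · rw [(hcross j (hmem j hj) t ht).1, (hcross i (hmem i hi) t ht).1, h2]
        exact hne (hnodup this).symm
      · -- swapped: l.get j = u i and u j = l.get i
        have hji : l.get j = u i := by
          funext t
          by_cases ht : t = 0
          · subst ht; exact h1
          · rw [(hcross j (hmem j hj) t ht).1, (hcross i (hmem i hi) t ht).2, h2]
        have huj : u j = l.get i := by
          funext t
          by_cases ht : t = 0
          · subst ht; exact h2
          · rw [(hcross j (hmem j hj) t ht).2, (hcross i (hmem i hi) t ht).1, h1]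
        rcases lt_trichotomy (i : ℕ) (j : ℕ) with h | h | h
        · exact hu2 j i h (huj ▸ mem_closedNbhd_self G1 (l.get i))
        · exact hne (Fin.ext h)
        · exact hu2 i j h (hji ▸ mem_closedNbhd_self G1 (l.get j))
    have := Finset.card_le_card_of_injOn _ hmaps hinj
    rwa [Finset.card_powersetCard, Finset.card_univ, Fintype.card_fin,
      Nat.choose_two_right] at this
  -- bound on good indices
  have hA : (Finset.univ.filter fun i : Fin l.length => u i 0 = l.get i 0).card
      ≤ p * γ := by
    set A := Finset.univ.filter fun i : Fin l.length => u i 0 = l.get i 0 with hAdef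
    have hfib := Finset.card_eq_sum_card_fiberwise
      (f := fun i : Fin l.length => l.get i 0) (s := A) (t := Finset.univ)
      (fun x _ => Finset.mem_univ _)
    rw [hfib]
    have hbound : ∀ c : Fin p, (A.filter fun i => l.get i 0 = c).card ≤ γ := by
      intro c
      set s := A.filter fun i => l.get i 0 = c with hsdef
      set e := s.orderIsoOfFin rfl with hedef
      have hmem : ∀ a : Fin s.card, u (e a) 0 = l.get (e a) 0 ∧ l.get (e a) 0 = c := by
        intro a
        have h1 := Finset.mem_filter.mp (e a).2
        have h2 := Finset.mem_filter.mp h1.1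
        exact ⟨h2.2, h1.2⟩
      set f : Fin s.card → (Fin m → Fin p) := fun a => Fin.tail (l.get (e a)) with hfdef
      have hfinj : Function.Injective f := by
        intro a b hab
        have h0 : l.get (e a) 0 = l.get (e b) 0 := by
          rw [(hmem a).2, (hmem b).2]
        have : l.get (e a) = l.get (e b) := (tail_eq_iff h0).mpr hab
        have := hnodup this
        exact e.injective (Subtype.ext this)
      have hlegal : IsLegalSeq G0 (List.ofFn f) := by
        refine isLegalSeq_ofFn hfinj ?_
        intro a
        refine ⟨Fin.tail (u (e a)), ?_, ?_⟩
        · exact (closedNbhd_copy (hmem a).1.symm).mp (hu1 (e a))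
        · intro b hb hcon
          have h0 : u (e a) 0 = l.get (e b) 0 := by
            rw [(hmem a).1, (hmem a).2, (hmem b).2]
          have : u (e a) ∈ closedNbhd G1 (l.get (e b)) :=
            (closedNbhd_copy h0.symm).mpr hcon
          have hlt : ((e b : Fin l.length) : ℕ) < ((e a : Fin l.length) : ℕ) := by
            have := e.strictMono hb
            exact this
          exact hu2 (e a) (e b) hlt this
      have := length_le_grundyDomNum hlegal
      rwa [List.length_ofFn] at this
    calc ∑ c ∈ Finset.univ, (A.filter fun i => l.get i 0 = c).card
        ≤ ∑ _c ∈ (Finset.univ : Finset (Fin p)), γ :=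
          Finset.sum_le_sum (fun c _ => hbound c)
      _ = p * γ := by simp [Finset.card_univ, mul_comm]
  have hsplit : (Finset.univ.filter fun i : Fin l.length => u i 0 = l.get i 0).card +
      (Finset.univ.filter fun i : Fin l.length => ¬ u i 0 = l.get i 0).card = l.length := by
    simpa using Finset.card_filter_add_card_filter_not
      (s := (Finset.univ : Finset (Fin l.length)))
      (p := fun i => u i 0 = l.get i 0)
  omega
end

section
/- For integers n ≥ 1 and p ≥ 1, consider the set L of vertices v = (v_1,…,v_n) of the Sierpiński graph S_p^n such that either v_n = 0, or there exist l with 2 ≤ l ≤ n and a < b in {0,…,p-1} such that v_{n-l+1} = a and v_{n-l+2} = ⋯ = v_n = b. Then the number of vertices in L is p^{n-1} + p(p^{n-1} - 1)/2. -/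
/-- The set `L` of vertices `v` of `S_p^n` such that the last bit of `v` is `0`, or
`v = ⟨x_1 … x_{n-l} a b^{l-1}⟩` for some `2 ≤ l ≤ n` and `a < b`. -/
def sierpLexSet (p n : ℕ) (hn : 1 ≤ n) : Set (Fin n → Fin p) :=
  {v | (v ⟨n - 1, by omega⟩).val = 0 ∨
    ∃ l, ∃ _ : 2 ≤ l, ∃ _ : l ≤ n, ∃ a b : Fin p, a < b ∧
      v ⟨n - l, by omega⟩ = a ∧
      ∀ i : Fin n, n - l + 1 ≤ i.val → v i = b}

def Tpred {p m : ℕ} (b : Fin p) (u : Fin m → Fin p) : Prop :=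
  ∃ k : Fin m, (∀ j : Fin m, j < k → u j = b) ∧ u k < b

lemma tpred_cons {p m : ℕ} (b x : Fin p) (u : Fin m → Fin p) :
    Tpred b (Fin.cons x u) ↔ x < b ∨ (x = b ∧ Tpred b u) := by
  constructor
  · rintro ⟨k, hpre, hlt⟩
    rcases Fin.eq_zero_or_eq_succ k with rfl | ⟨k', rfl⟩
    · left; simpa using hlt
    · right
      constructor
      · have := hpre 0 (by simp [Fin.pos_iff_ne_zero, Fin.succ_ne_zero]); simpa using this
      · refine ⟨k', fun j hj => ?_, by simpa using hlt⟩
        have := hpre j.succ (by simpa using hj)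
        simpa using this
  · rintro (hx | ⟨rfl, k, hpre, hlt⟩)
    · exact ⟨0, by simp, by simpa using hx⟩
    · refine ⟨k.succ, fun j hj => ?_, by simpa using hlt⟩
      rcases Fin.eq_zero_or_eq_succ j with rfl | ⟨j', rfl⟩
      · simp
      · have : j' < k := by simpa using hj
        simpa using hpre j' this

lemma natcard_sigma {ι : Type*} [Fintype ι] (κ : ι → Type*) [∀ i, Fintype (κ i)] :
    Nat.card (Sigma κ) = ∑ i, Nat.card (κ i) := by
  simp [Nat.card_eq_fintype_card]

lemma natcard_prod_subtype {α β : Type*} [Fintype α] [Finite β] (P : α → β → Prop) :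
    Nat.card {x : α × β // P x.1 x.2} = ∑ a, Nat.card {b // P a b} := by
  classical
  cases nonempty_fintype β
  rw [Nat.card_congr (Equiv.subtypeProdEquivSigmaSubtype P)]
  exact natcard_sigma _

lemma filter_lt_card {p : ℕ} (b : Fin p) :
    (Finset.univ.filter fun x : Fin p => x < b).card = b.val := by
  have : (Finset.univ.filter fun x : Fin p => x < b) = Finset.Iio b := by
    ext x; simp
  rw [this, Fin.card_Iio]

lemma tcard (p : ℕ) (b : Fin p) (m : ℕ) :
    Nat.card {u : Fin m → Fin p // Tpred b u}
      = b.val * ∑ j ∈ Finset.range m, p ^ j := by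
  induction m with
  | zero =>
    have : IsEmpty {u : Fin 0 → Fin p // Tpred b u} := by
      constructor; rintro ⟨u, k, -⟩; exact k.elim0
    simp [Nat.card_of_isEmpty]
  | succ m ih =>
    classical
    have e1 : {u : Fin (m+1) → Fin p // Tpred b u} ≃
        {x : Fin p × (Fin m → Fin p) // x.1 < b ∨ (x.1 = b ∧ Tpred b x.2)} :=
      ((Fin.consEquiv fun _ => Fin p).subtypeEquiv (by
        rintro ⟨x, u⟩; exact (tpred_cons b x u).symm)).symm
    rw [Nat.card_congr e1,
      natcard_prod_subtype fun (a : Fin p) (u : Fin m → Fin p) => a < b ∨ (a = b ∧ Tpred b u)]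
    have hx : ∀ x : Fin p, Nat.card {u : Fin m → Fin p // x < b ∨ (x = b ∧ Tpred b u)}
        = (if x < b then p ^ m else 0)
          + (if x = b then b.val * ∑ j ∈ Finset.range m, p ^ j else 0) := by
      intro x
      rcases lt_trichotomy x b with h | h | h
      · rw [if_pos h, if_neg h.ne]
        rw [Nat.card_congr (Equiv.subtypeUnivEquiv fun u => Or.inl h)]
        simp [Nat.card_eq_fintype_card]
      · subst h
        rw [if_neg (lt_irrefl x), if_pos rfl]
        have hiff : ∀ u : Fin m → Fin p, (x < x ∨ (x = x ∧ Tpred x u)) ↔ Tpred x u := by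
          intro u; simp
        rw [Nat.card_congr (Equiv.subtypeEquivRight hiff), ih]
        omega
      · rw [if_neg (asymm h), if_neg (ne_of_gt h)]
        have : IsEmpty {u : Fin m → Fin p // x < b ∨ (x = b ∧ Tpred b u)} := by
          constructor; rintro ⟨u, h' | ⟨rfl, -⟩⟩
          · exact absurd h' (asymm h)
          · exact lt_irrefl x h
        simp [Nat.card_of_isEmpty]
    rw [Finset.sum_congr rfl fun x _ => hx x, Finset.sum_add_distrib]
    rw [Finset.sum_ite_eq' Finset.univ b fun _ => b.val * ∑ j ∈ Finset.range m, p ^ j]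
    rw [← Finset.sum_filter, Finset.sum_const, smul_eq_mul, filter_lt_card]
    rw [Finset.sum_range_succ, if_pos (Finset.mem_univ b)]
    ring

lemma vcast {p n : ℕ} (v : Fin n → Fin p) {i j : ℕ} (hi : i < n) (hj : j < n)
    (h : i = j) : v ⟨i, hi⟩ = v ⟨j, hj⟩ := by subst h; rfl

def lastRevEquiv (p n : ℕ) (hn : 1 ≤ n) :
    (Fin n → Fin p) ≃ (Fin p × (Fin (n-1) → Fin p)) where
  toFun v := (v ⟨n-1, by omega⟩, fun i => v ⟨n-2-i.val, by omega⟩)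
  invFun x j := if h : j.val = n-1 then x.1
    else x.2 ⟨n-2-j.val, by have := j.isLt; omega⟩
  left_inv v := by
    funext j
    dsimp only
    split
    · next h => exact congrArg v (Fin.ext (by simpa using h.symm))
    · next h =>
      have := j.isLt
      exact congrArg v (Fin.ext (by simp only [Fin.val_mk]; omega))
  right_inv x := by
    obtain ⟨b, u⟩ := x
    dsimp only
    ext
    · simp
    · next i =>
      dsimp only
      rw [dif_neg (by have := i.isLt; omega)]
      have := i.isLt
      have h2 : n - 2 - (n-2-i.val) = i.val := by omega
      congr 1
      apply congrArg
      exact Fin.ext h2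

lemma sierp_char (p n : ℕ) (hn : 1 ≤ n) (v : Fin n → Fin p) :
    v ∈ sierpLexSet p n hn ↔
      ((v ⟨n-1, by omega⟩).val = 0 ∨
        Tpred (v ⟨n-1, by omega⟩) (fun i : Fin (n-1) => v ⟨n-2-i.val, by omega⟩)) := by
  constructor
  · rintro (h0 | ⟨l, hl2, hln, a, b, hab, hva, htail⟩)
    · exact Or.inl h0
    · have hb : v ⟨n-1, by omega⟩ = b := htail ⟨n-1, by omega⟩ (by dsimp only; omega)
      refine Or.inr ⟨⟨l-2, by omega⟩, fun j hj => ?_, ?_⟩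
      · have hj' : (j : ℕ) < l - 2 := hj
        have hj2 := j.isLt
        have h3 := htail ⟨n-2-j.val, by omega⟩ (by dsimp only; omega)
        dsimp only
        rw [h3, hb]
      · dsimp only
        rw [vcast v (show n-2-(l-2) < n by omega) (show n - l < n by omega) (by omega),
          hva, hb]
        exact hab
  · rintro (h0 | ⟨k, hpre, hlt⟩)
    · exact Or.inl h0
    · have hk := k.isLt
      dsimp only at hlt
      refine Or.inr ⟨k.val + 2, by omega, by omega, v ⟨n-(k.val+2), by omega⟩,
        v ⟨n-1, by omega⟩, ?_, rfl, ?_⟩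
      · rw [vcast v (show n-(k.val+2) < n by omega) (show n-2-k.val < n by omega)
          (by omega)]
        exact hlt
      · intro i hi
        rcases eq_or_lt_of_le (show (i:ℕ) ≤ n-1 from by have := i.isLt; omega)
          with he | hlt'
        · exact congrArg v (Fin.ext (by simpa using he))
        · have hi2 := i.isLt
          have hj : n-2-i.val < k.val := by omega
          have h4 := hpre ⟨n-2-i.val, by omega⟩ hj
          dsimp only at h4
          rw [← h4]
          exact congrArg v (Fin.ext (by simp only [Fin.val_mk]; omega))

lemma geom_nat (p : ℕ) (hp : 1 ≤ p) (m : ℕ) :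
    (p - 1) * ∑ j ∈ Finset.range m, p ^ j = p ^ m - 1 := by
  induction m with
  | zero => simp
  | succ m ih =>
    rw [Finset.sum_range_succ, Nat.mul_add, ih, Nat.sub_one_mul, Nat.mul_comm p (p ^ m), pow_succ]
    have h1 : 1 ≤ p ^ m := Nat.one_le_pow _ _ hp
    have h2 : p ^ m ≤ p ^ m * p := Nat.le_mul_of_pos_right _ hp
    omega

theorem card_sierpLexSet (p n : ℕ) (hp : 1 ≤ p) (hn : 1 ≤ n) :
    (sierpLexSet p n hn).ncard = p ^ (n - 1) + p * (p ^ (n - 1) - 1) / 2 := by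
  classical
  rw [← Nat.card_coe_set_eq]
  have e : {v // v ∈ sierpLexSet p n hn} ≃
      {x : Fin p × (Fin (n-1) → Fin p) // x.1.val = 0 ∨ Tpred x.1 x.2} :=
    (lastRevEquiv p n hn).subtypeEquiv (fun v => sierp_char p n hn v)
  rw [Nat.card_congr e,
    natcard_prod_subtype fun (b : Fin p) (u : Fin (n-1) → Fin p) => b.val = 0 ∨ Tpred b u]
  set S := ∑ j ∈ Finset.range (n-1), p ^ j with hS
  have hb : ∀ b : Fin p, Nat.card {u : Fin (n-1) → Fin p // b.val = 0 ∨ Tpred b u}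
      = (if b = (⟨0, hp⟩ : Fin p) then p ^ (n-1) else 0) + b.val * S := by
    intro b
    by_cases h : b.val = 0
    · rw [if_pos (Fin.ext h)]
      rw [Nat.card_congr (Equiv.subtypeUnivEquiv fun u => Or.inl h)]
      have hc : Nat.card (Fin (n-1) → Fin p) = p ^ (n-1) := by
        simp [Nat.card_eq_fintype_card]
      rw [hc, h]; simp
    · rw [if_neg (fun he => h (by rw [he]))]
      have hiff : ∀ u : Fin (n-1) → Fin p, (b.val = 0 ∨ Tpred b u) ↔ Tpred b u :=
        fun u => ⟨fun h' => h'.resolve_left h, Or.inr⟩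
      rw [Nat.card_congr (Equiv.subtypeEquivRight hiff), tcard]
      simp [hS]
  rw [Finset.sum_congr rfl fun b _ => hb b, Finset.sum_add_distrib,
    Finset.sum_ite_eq' Finset.univ (⟨0, hp⟩ : Fin p) fun _ => p ^ (n-1),
    if_pos (Finset.mem_univ _), ← Finset.sum_mul]
  have hsum : ∑ b : Fin p, (b : ℕ) = p * (p-1) / 2 := by
    rw [Fin.sum_univ_eq_sum_range (fun i => i) p, Finset.sum_range_id]
  rw [hsum]
  obtain ⟨c, hc⟩ : 2 ∣ p * (p-1) := by
    have h1 : Even ((p-1) * (p-1+1)) := Nat.even_mul_succ_self (p-1)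
    rw [Nat.sub_add_cancel hp] at h1
    rw [Nat.mul_comm]
    exact h1.two_dvd
  have hg := geom_nat p hp (n-1)
  have key : p * (p ^ (n-1) - 1) = 2 * (c * S) := by
    rw [← hg, ← mul_assoc, hc, mul_assoc]
  rw [key, Nat.mul_div_cancel_left _ (by norm_num : 0 < 2), hc,
    Nat.mul_div_cancel_left c (by norm_num : 0 < 2)]
end

section
/- For integers n ≥ 1 and p ≥ 1, let L be the set of vertices v = (v_1,…,v_n) of the Sierpiński graph S_p^n such that either v_n = 0, or there exist l with 2 ≤ l ≤ n and a < b in {0,…,p-1} such that v_{n-l+1} = a and v_{n-l+2} = ⋯ = v_n = b. Then the sequence listing the vertices of L in lexicographic order (of their coordinate tuples) is a legal dominating sequence of S_p^n; in particular it is a Grundy dominating sequence of S_p^n. -/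
/-- The (strict) lexicographic order on vertices of `S_p^n`. -/
def lexLt {p n : ℕ} (u v : Fin n → Fin p) : Prop :=
  ∃ i : Fin n, (∀ j : Fin n, j < i → u j = v j) ∧ u i < v i

namespace SierpAux

variable {p n : ℕ}

def SRel (u v : Fin n → Fin p) : Prop :=
  ∃ h : Fin n, (∀ t : Fin n, t < h → u t = v t) ∧ u h ≠ v h ∧
    (∀ t : Fin n, h < t → u t = v h ∧ v t = u h)

lemma SRel.symm {u v : Fin n → Fin p} (h : SRel u v) : SRel v u := by
  obtain ⟨h, h1, h2, h3⟩ := h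
  exact ⟨h, fun t ht => (h1 t ht).symm, h2.symm,
    fun t ht => ⟨(h3 t ht).2, (h3 t ht).1⟩⟩

lemma mem_closedNbhd_iff {u v : Fin n → Fin p} :
    u ∈ closedNbhd (sierpinskiGraph p n) v ↔ u = v ∨ SRel u v := by
  unfold closedNbhd sierpinskiGraph
  rw [Set.mem_insert_iff]
  constructor
  · rintro (rfl | hadj)
    · exact Or.inl rfl
    · rw [SimpleGraph.mem_neighborSet, SimpleGraph.fromRel_adj] at hadj
      rcases hadj.2 with h | h
      · exact Or.inr (SRel.symm h)
      · exact Or.inr h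
  · rintro (rfl | hrel)
    · exact Or.inl rfl
    · right
      rw [SimpleGraph.mem_neighborSet, SimpleGraph.fromRel_adj]
      refine ⟨?_, Or.inr hrel⟩
      obtain ⟨h, _, h2, _⟩ := hrel
      intro he; exact h2 (by rw [he])

lemma lexLt_irrefl (u : Fin n → Fin p) : ¬ lexLt u u := by
  rintro ⟨i, _, hlt⟩; exact lt_irrefl _ hlt

lemma lexLt_asymm {u v : Fin n → Fin p} (h1 : lexLt u v) (h2 : lexLt v u) : False := by
  obtain ⟨i, hi, hilt⟩ := h1
  obtain ⟨j, hj, hjlt⟩ := h2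
  rcases lt_trichotomy i j with h | rfl | h
  · rw [hj i h] at hilt; exact lt_irrefl _ hilt
  · exact lt_irrefl _ (hilt.trans hjlt)
  · rw [hi j h] at hjlt; exact lt_irrefl _ hjlt

/-- membership in a clique (agree off the last coordinate) gives closed-nbhd membership -/
lemma clique_mem (hn : 1 ≤ n) {u v : Fin n → Fin p}
    (h : ∀ t : Fin n, (t : ℕ) < n - 1 → u t = v t) :
    u ∈ closedNbhd (sierpinskiGraph p n) v := by
  rw [mem_closedNbhd_iff]
  by_cases he : u = v
  · exact Or.inl he
  · right
    refine ⟨⟨n - 1, by omega⟩, fun t ht => h t ht, ?_, fun t ht => absurd t.isLt (by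
      have : (n : ℕ) - 1 < (t : ℕ) := ht
      omega)⟩
    intro heq
    apply he
    funext t
    rcases Nat.lt_or_ge (t : ℕ) (n - 1) with h' | h'
    · exact h t h'
    · have : t = ⟨n - 1, by omega⟩ := Fin.ext (by have := t.isLt; simp; omega)
      rw [this]; exact heq


lemma legal_witness (hp : 1 ≤ p) (hn : 1 ≤ n) {v : Fin n → Fin p}
    (hv : v ∈ sierpLexSet p n hn) :
    ∃ u, u ∈ closedNbhd (sierpinskiGraph p n) v ∧
      ∀ w, lexLt w v → u ∉ closedNbhd (sierpinskiGraph p n) w := by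
  have hlastlt : n - 1 < n := by omega
  set last : Fin n := ⟨n - 1, hlastlt⟩ with hlastdef
  have hvlast : ∀ t : Fin n, t ≠ last → (t : ℕ) < n - 1 := by
    intro t ht
    have := t.isLt
    by_contra h
    exact ht (Fin.ext (by simp [hlastdef]; omega))
  rcases hv with hv0 | ⟨m, hm2, hmn, a, b, hab, ha, hb⟩
  · -- case v_last = 0 ; witness: v with last coord p-1
    set u : Fin n → Fin p := fun t => if t = last then ⟨p - 1, by omega⟩ else v t with hudef
    have hut : ∀ t : Fin n, t ≠ last → u t = v t := by
      intro t ht; simp [hudef, ht]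
    have hulast : u last = ⟨p - 1, by omega⟩ := by simp [hudef]
    refine ⟨u, clique_mem hn (fun t ht => hut t (fun he => absurd (he ▸ ht) (lt_irrefl _))), ?_⟩
    intro w hw hmemw
    have hv0' : (v last).val = 0 := hv0
    rw [mem_closedNbhd_iff] at hmemw
    rcases hmemw with rfl | ⟨h, h1, h2, h3⟩
    · -- w = u
      obtain ⟨k, hk1, hk2⟩ := hw
      by_cases hk : k = last
      · subst hk
        rw [hulast] at hk2
        have : (p : ℕ) - 1 < (v last).val := hk2
        omega
      · rw [hut k hk] at hk2; exact lt_irrefl _ hk2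
    · by_cases hh : h = last
      · subst hh
        obtain ⟨k, hk1, hk2⟩ := hw
        by_cases hk : k = last
        · subst hk
          have : (w last).val < (v last).val := hk2
          omega
        · have hklt : k < last := by
            have := hvlast k hk; simp [hlastdef, Fin.lt_def]; omega
          rw [← h1 k hklt, hut k hk] at hk2
          exact lt_irrefl _ hk2
      · -- h < last
        have hhl : (h : ℕ) < n - 1 := hvlast h hh
        have hlgt : h < last := by simp [hlastdef, Fin.lt_def]; omega
        have h4 := (h3 last hlgt).1  -- u last = w h
        have hwh : w h = ⟨p - 1, by omega⟩ := by rw [← h4, hulast]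
        have hvh : v h ≠ w h := by
          rw [← hut h hh]; exact h2
        obtain ⟨k, hk1, hk2⟩ := hw
        rcases lt_trichotomy k h with hlt | rfl | hgt
        · rw [← h1 k hlt, hut k (by
            intro he; rw [he] at hlt
            exact absurd (hlt.trans hlgt) (lt_irrefl _))] at hk2
          exact lt_irrefl _ hk2
        · rw [hwh] at hk2
          have h5 : (p : ℕ) - 1 < (v k).val := hk2
          have := (v k).isLt; omega
        · exact hvh (hk1 h hgt).symm
  · -- case v = (x, a, b^(m-1))
    have hh0lt : n - m < n := by omega
    set h0 : Fin n := ⟨n - m, hh0lt⟩ with hh0def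
    have hvh0 : v h0 = a := ha
    have hvb : ∀ t : Fin n, h0 < t → v t = b := by
      intro t ht
      exact hb t (by simp [hh0def, Fin.lt_def] at ht; omega)
    have h0last : h0 < last := by simp [hh0def, hlastdef, Fin.lt_def]; omega
    set u : Fin n → Fin p := fun t => if t < h0 then v t else if t = h0 then b else a
      with hudef
    have hu_lt : ∀ t : Fin n, t < h0 → u t = v t := by intro t ht; simp [hudef, ht]
    have hu_h0 : u h0 = b := by simp [hudef]
    have hu_gt : ∀ t : Fin n, h0 < t → u t = a := by
      intro t ht
      simp [hudef, not_lt_of_gt ht, (lt_iff_le_and_ne.mp ht).2.symm]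
    have husrel : SRel u v := by
      refine ⟨h0, fun t ht => (hu_lt t ht).symm ▸ rfl, ?_, ?_⟩
      · rw [hu_h0, hvh0]; exact hab.ne'
      · intro t ht
        exact ⟨by rw [hu_gt t ht, hvh0], by rw [hvb t ht, hu_h0]⟩
    refine ⟨u, mem_closedNbhd_iff.mpr (Or.inr husrel), ?_⟩
    intro w hw hmemw
    have hsub : (∀ t : Fin n, t < h0 → w t = v t) → w h0 = b → False := by
      intro hA hB
      exact lexLt_asymm hw ⟨h0, fun j hj => (hA j hj).symm,
        by rw [hvh0, hB]; exact hab⟩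
    rw [mem_closedNbhd_iff] at hmemw
    rcases hmemw with rfl | ⟨h, h1, h2, h3⟩
    · exact hsub (fun t ht => hu_lt t ht) hu_h0
    · rcases lt_trichotomy h h0 with hlt | rfl | hgt
      · -- h < h0 : u h0 = w h and u last = w h yet u h0 = b ≠ a = u last
        have hx := (h3 h0 hlt).1
        have hy := (h3 last (hlt.trans h0last)).1
        rw [hu_h0] at hx
        rw [hu_gt last h0last] at hy
        exact hab.ne' (by rw [hx, hy])
      · -- h = h0 : w = v
        have hw_eq : w = v := by
          funext t
          rcases lt_trichotomy t h0 with hlt | rfl | hgt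
          · rw [← h1 t hlt, hu_lt t hlt]
          · have := (h3 last h0last).1
            rw [hu_gt last h0last] at this
            rw [← this, hvh0]
          · rw [(h3 t hgt).2, hu_h0, hvb t hgt]
        rw [hw_eq] at hw
        exact lexLt_irrefl v hw
      · -- h0 < h
        by_cases hh : h = last
        · subst hh
          refine hsub (fun t ht => ?_) ?_
          · rw [← h1 t (ht.trans h0last), hu_lt t ht]
          · rw [← h1 h0 h0last, hu_h0]
        · have hhl : h < last := by
            have ht := h.isLt
            have : (h : ℕ) ≠ n - 1 := fun he => hh (Fin.ext (by simp [hlastdef]; omega))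
            simp [hlastdef, Fin.lt_def]; omega
          have := (h3 last hhl).1
          rw [hu_gt last h0last] at this
          rw [← this, hu_gt h hgt] at h2
          exact h2 rfl


lemma length_le (hp : 1 ≤ p) (hn : 1 ≤ n) (l : List (Fin n → Fin p))
    (hmem : ∀ v : Fin n → Fin p, v ∈ l ↔ v ∈ sierpLexSet p n hn) (hnodup : l.Nodup)
    (s : List (Fin n → Fin p)) (hs : IsLegalSeq (sierpinskiGraph p n) s) :
    s.length ≤ l.length := by
  classical
  obtain ⟨hnd, hleg⟩ := hs
  choose u hu1 hu2 using hleg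
  have hlastlt : n - 1 < n := by omega
  set last : Fin n := ⟨n - 1, hlastlt⟩ with hlastdef
  have key : ∀ i : Fin s.length, ∃ e : Fin n → Fin p, e ∈ l ∧
      (((∀ t : Fin n, (t : ℕ) < n - 1 → e t = s.get i t) ∧ (e last).val = 0 ∧
        (∀ t : Fin n, (t : ℕ) < n - 1 → u i t = s.get i t)) ∨
       (∃ h : Fin n, (h : ℕ) < n - 1 ∧ e h < e last ∧
          (∀ t : Fin n, h < t → e t = e last) ∧
          ((e = s.get i ∧
              (fun t : Fin n => if t < h then e t else if t = h then e last else e h) = u i) ∨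
           (e = u i ∧
              (fun t : Fin n => if t < h then e t else if t = h then e last else e h)
                = s.get i)))) := by
    intro i
    by_cases hA : ∀ t : Fin n, (t : ℕ) < n - 1 → u i t = s.get i t
    · refine ⟨fun t => if t = last then ⟨0, by omega⟩ else s.get i t, ?_, Or.inl ⟨?_, ?_, hA⟩⟩
      · rw [hmem]
        left
        simp [hlastdef]
      · intro t ht
        dsimp only
        rw [if_neg]
        intro he
        rw [he] at ht
        exact absurd ht (lt_irrefl _)
      · dsimp only
        rw [if_pos rfl]
    · have hne : u i ≠ s.get i := fun h => hA (fun t _ => by rw [h])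
      rcases mem_closedNbhd_iff.mp (hu1 i) with heq | ⟨h, h1, h2, h3⟩
      · exact absurd heq hne
      · have hhl : (h : ℕ) < n - 1 := by
          by_contra hcon
          apply hA
          intro t ht
          refine h1 t ?_
          have := h.isLt
          simp only [Fin.lt_def]
          omega
        have hlgt : h < last := by simp only [Fin.lt_def, hlastdef]; omega
        have hislt := h.isLt
        by_cases hc : u i h < s.get i h
        · refine ⟨u i, ?_, Or.inr ⟨h, hhl, ?_, ?_, Or.inr ⟨rfl, ?_⟩⟩⟩
          · rw [hmem]
            right
            refine ⟨n - (h : ℕ), by omega, by omega, u i h, s.get i h, hc, ?_, ?_⟩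
            · exact congrArg (u i) (Fin.ext (by simp; omega))
            · intro t ht
              refine (h3 t ?_).1
              simp only [Fin.lt_def]
              omega
          · rw [(h3 last hlgt).1]; exact hc
          · intro t ht; rw [(h3 t ht).1, (h3 last hlgt).1]
          · funext t
            rcases lt_trichotomy t h with hlt | rfl | hgt
            · rw [if_pos hlt]; exact h1 t hlt
            · rw [if_neg (lt_irrefl _), if_pos rfl, (h3 last hlgt).1]
            · rw [if_neg (not_lt_of_gt hgt), if_neg (ne_of_gt hgt), (h3 t hgt).2]
        · have hcx : s.get i h < u i h := lt_of_le_of_ne (not_lt.mp hc) (Ne.symm h2)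
          refine ⟨s.get i, ?_, Or.inr ⟨h, hhl, ?_, ?_, Or.inl ⟨rfl, ?_⟩⟩⟩
          · rw [hmem]
            right
            refine ⟨n - (h : ℕ), by omega, by omega, s.get i h, u i h, hcx, ?_, ?_⟩
            · exact congrArg (s.get i) (Fin.ext (by simp; omega))
            · intro t ht
              refine (h3 t ?_).2
              simp only [Fin.lt_def]
              omega
          · rw [(h3 last hlgt).2]; exact hcx
          · intro t ht; rw [(h3 t ht).2, (h3 last hlgt).2]
          · funext t
            rcases lt_trichotomy t h with hlt | rfl | hgt
            · rw [if_pos hlt]; exact (h1 t hlt).symm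
            · rw [if_neg (lt_irrefl _), if_pos rfl, (h3 last hlgt).2]
            · rw [if_neg (not_lt_of_gt hgt), if_neg (ne_of_gt hgt), (h3 t hgt).1]
  choose F hF1 hF2 using key
  have hmain : ∀ i j : Fin s.length, (i : ℕ) < (j : ℕ) → F i ≠ F j := by
    intro i j hij heq
    have hnotin : u j ∉ closedNbhd (sierpinskiGraph p n) (s.get i) := hu2 j i hij
    apply hnotin
    rcases hF2 i with ⟨hA1, hA2, hA3⟩ | ⟨h, hh, hlt', htail, hpr⟩ <;>
      rcases hF2 j with ⟨hB1, hB2, hB3⟩ | ⟨h', hh', hlt'', htail', hpr'⟩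
    · apply clique_mem hn
      intro t ht
      rw [hB3 t ht, ← hB1 t ht, ← heq, hA1 t ht]
    · exfalso
      have hx : (F j h').val < (F j last).val := hlt''
      rw [← heq] at hx
      omega
    · exfalso
      have hx : (F i h).val < (F i last).val := hlt'
      rw [heq] at hx
      omega
    · have hhh : h = h' := by
        rcases lt_trichotomy h h' with hlt | he | hgt
        · exfalso
          have hx : F j h' < F j last := hlt''
          rw [← heq, htail h' hlt] at hx
          exact lt_irrefl _ hx
        · exact he
        · exfalso
          have hx : F i h < F i last := hlt'
          rw [heq, htail' h hgt] at hx
          exact lt_irrefl _ hx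
      subst hhh
      have hm1 : F i ∈ closedNbhd (sierpinskiGraph p n) (s.get i) := by
        rcases hpr with ⟨he1, _⟩ | ⟨he1, _⟩
        · rw [he1]; exact mem_closedNbhd_iff.mpr (Or.inl rfl)
        · rw [he1]; exact hu1 i
      have hm2 : (fun t : Fin n => if t < h then F i t else if t = h then F i last else F i h)
          ∈ closedNbhd (sierpinskiGraph p n) (s.get i) := by
        rcases hpr with ⟨_, he2⟩ | ⟨_, he2⟩
        · rw [he2]; exact hu1 i
        · rw [he2]; exact mem_closedNbhd_iff.mpr (Or.inl rfl)
      rcases hpr' with ⟨he1, he2⟩ | ⟨he1, he2⟩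
      · have : u j = (fun t : Fin n =>
            if t < h then F i t else if t = h then F i last else F i h) := by
          rw [heq]; exact he2.symm
        rw [this]; exact hm2
      · have : u j = F i := by rw [heq]; exact he1.symm
        rw [this]; exact hm1
  have hinj : Function.Injective F := by
    intro i j heq
    by_contra hne'
    rcases lt_trichotomy (i : ℕ) (j : ℕ) with hx | hx | hx
    · exact hmain i j hx heq
    · exact hne' (Fin.ext hx)
    · exact hmain j i hx heq.symm
  have hcard := Finset.card_le_card_of_injOn (s := (Finset.univ : Finset (Fin s.length)))
      (t := l.toFinset) F (fun a _ => List.mem_toFinset.mpr (hF1 a))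
      (fun a _ b _ hab => hinj hab)
  have hlen : s.length ≤ l.toFinset.card := by simpa using hcard
  rwa [List.toFinset_card_of_nodup hnodup] at hlen

end SierpAux

open SierpAux in
theorem sierpinski_lex_grundy_sequence (p n : ℕ) (hp : 1 ≤ p) (hn : 1 ≤ n)
    (l : List (Fin n → Fin p))
    (hmem : ∀ v : Fin n → Fin p, v ∈ l ↔ v ∈ sierpLexSet p n hn)
    (hsorted : l.Pairwise lexLt) :
    IsDomSeq (sierpinskiGraph p n) l ∧
    l.length = grundyDomNum (sierpinskiGraph p n) := by
  classical
  have hnodup : l.Nodup := by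
    refine List.Pairwise.imp ?_ hsorted
    intro a b hab
    rintro rfl
    exact lexLt_asymm hab hab
  have hpair : ∀ i j : Fin l.length, (i : ℕ) < (j : ℕ) → lexLt (l.get i) (l.get j) := by
    intro i j hij
    exact List.pairwise_iff_get.mp hsorted i j (by exact hij)
  have hlegal : IsLegalSeq (sierpinskiGraph p n) l := by
    refine ⟨hnodup, fun i => ?_⟩
    obtain ⟨u, hu1, hu2⟩ := legal_witness hp hn ((hmem (l.get i)).mp (l.get_mem i))
    exact ⟨u, hu1, fun j hj => hu2 (l.get j) (hpair j i hj)⟩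
  have hdom : ∀ u : Fin n → Fin p, ∃ v ∈ l, u ∈ closedNbhd (sierpinskiGraph p n) v := by
    intro u
    refine ⟨fun t => if t = (⟨n - 1, by omega⟩ : Fin n) then ⟨0, by omega⟩ else u t, ?_, ?_⟩
    · rw [hmem]
      left
      simp
    · apply clique_mem hn
      intro t ht
      rw [if_neg]
      intro he
      rw [he] at ht
      simp at ht
  have hds : IsDomSeq (sierpinskiGraph p n) l := ⟨hlegal, hdom⟩
  refine ⟨hds, ?_⟩
  have hmemS : l.length ∈ {k : ℕ | ∃ s : List (Fin n → Fin p),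
      IsDomSeq (sierpinskiGraph p n) s ∧ s.length = k} := ⟨l, hds, rfl⟩
  have hbd : ∀ k ∈ {k : ℕ | ∃ s : List (Fin n → Fin p),
      IsDomSeq (sierpinskiGraph p n) s ∧ s.length = k}, k ≤ l.length := by
    rintro k ⟨s, hsd, rfl⟩
    exact length_le hp hn l hmem hnodup s hsd.1
  exact le_antisymm (le_csSup ⟨l.length, hbd⟩ hmemS) (csSup_le ⟨l.length, hmemS⟩ hbd)
end

section
/- Let G be a finite simple graph on vertices v_1, …, v_n which admits an interval representation assigning to each v_i a closed real interval [a_i, b_i] such that v_i and v_j (i ≠ j) are adjacent if and only if [a_i, b_i] ∩ [a_j, b_j] ≠ ∅, and suppose all 2n endpoints a_1, b_1, …, a_n, b_n are pairwise distinct. Let e_1 < e_2 < ⋯ < e_{2n} be the endpoints listed in increasing order. Then γ_gr(G) equals the number of indices k ∈ {1, …, 2n-1} such that e_k is a left endpoint (e_k = a_i for some i) and e_{k+1} is a right endpoint (e_{k+1} = b_j for some j). -/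
namespace GrundyAux

variable {V : Type*} {N : ℕ}

/-- `k` is the index of a left endpoint (w.r.t. endpoint function `a`). -/
def IsLeft (a : V → ℝ) (e : Fin N → ℝ) (k : ℕ) : Prop :=
  ∃ h : k < N, ∃ i, a i = e ⟨k, h⟩

/-- The set of indices `k` such that `e k` is a left endpoint and `e (k+1)` a right one. -/
noncomputable def lrSet (a b : V → ℝ) (e : Fin N → ℝ) : Finset (Fin N) :=
  @Finset.filter _ (fun k => IsLeft a e ↑k ∧ IsLeft b e (↑k + 1)) (Classical.decPred _)
    Finset.univ

variable {G : SimpleGraph V} {a b : V → ℝ} {e : Fin N → ℝ}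

lemma mem_lrSet {k : Fin N} :
    k ∈ lrSet a b e ↔ IsLeft a e ↑k ∧ IsLeft b e (↑k + 1) := by
  classical
  simp [lrSet]

lemma ab_ne (hdistinct : Function.Injective (Sum.elim a b : V ⊕ V → ℝ)) :
    ∀ i j : V, a i ≠ b j := by
  intro i j h
  have : (Sum.inl i : V ⊕ V) = Sum.inr j := hdistinct (by simpa using h)
  simp at this

lemma not_left_and_right (hd : ∀ i j : V, a i ≠ b j) {k : ℕ} :
    ¬(IsLeft a e k ∧ IsLeft b e k) := by
  rintro ⟨⟨h1, i, hi⟩, ⟨h2, j, hj⟩⟩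
  exact hd i j (hi.trans hj.symm)

lemma exists_idx (hrange : Set.range e = Set.range a ∪ Set.range b) {x : ℝ}
    (hx : x ∈ Set.range a ∪ Set.range b) : ∃ p : Fin N, e p = x := by
  rw [← hrange] at hx; exact hx

lemma isLeft_of_eq {p : Fin N} {v : V} (h : a v = e p) : IsLeft a e ↑p :=
  ⟨p.isLt, v, by rwa [Fin.eta]⟩

/-- Key gap lemma: between a left endpoint index and a later right endpoint index
there is a consecutive LR pair. -/
lemma gap (hrange : Set.range e = Set.range a ∪ Set.range b)
    (hd : ∀ i j : V, a i ≠ b j) {p q : ℕ}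
    (hp : IsLeft a e p) (hq : IsLeft b e q) (hpq : p < q) :
    ∃ k, p ≤ k ∧ k + 1 ≤ q ∧ IsLeft a e k ∧ IsLeft b e (k + 1) := by
  classical
  set T : Finset ℕ := (Finset.range q).filter (fun k => p ≤ k ∧ IsLeft a e k) with hT
  have hpT : p ∈ T := by simp [hT, hpq, hp]
  have hne : T.Nonempty := ⟨p, hpT⟩
  set k := T.max' hne with hk
  have hmem : k ∈ T := T.max'_mem hne
  rw [hT, Finset.mem_filter, Finset.mem_range] at hmem
  obtain ⟨hkq, hpk, hkL⟩ : k < q ∧ p ≤ k ∧ IsLeft a e k := ⟨hmem.1, hmem.2.1, hmem.2.2⟩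
  have hk1q : k + 1 ≤ q := hkq
  refine ⟨k, hpk, hk1q, hkL, ?_⟩
  have hk1N : k + 1 < N := lt_of_le_of_lt hk1q hq.choose
  have := (exists_idx (a := a) (b := b) hrange (x := e ⟨k+1, hk1N⟩)
    (by rw [← hrange]; exact Set.mem_range_self _))
  have hor : IsLeft a e (k+1) ∨ IsLeft b e (k+1) := by
    have hmem : e ⟨k+1, hk1N⟩ ∈ Set.range a ∪ Set.range b := by
      rw [← hrange]; exact Set.mem_range_self _
    rcases hmem with ⟨i, hi⟩ | ⟨j, hj⟩
    · exact Or.inl ⟨hk1N, i, hi⟩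
    · exact Or.inr ⟨hk1N, j, hj⟩
  rcases hor with hL | hR
  · -- contradicts maximality if k+1 < q; contradicts hq if k+1 = q
    rcases lt_or_eq_of_le hk1q with hlt | heq
    · have : k + 1 ∈ T := by simp [hT, hlt, le_trans hpk (Nat.le_succ k), hL]
      have := T.le_max' _ this
      omega
    · exact absurd ⟨heq ▸ hL, hq⟩ (not_left_and_right hd)
  · exact hR

lemma mem_closedNbhd_iff (hab : ∀ v, a v ≤ b v)
    (hrep : ∀ u v : V, u ≠ v →
      (G.Adj u v ↔ (Set.Icc (a u) (b u) ∩ Set.Icc (a v) (b v)).Nonempty))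
    {u v : V} :
    u ∈ closedNbhd G v ↔ max (a u) (a v) ≤ min (b u) (b v) := by
  rcases eq_or_ne u v with rfl | huv
  · simp [closedNbhd, hab u]
  · have h1 : u ∈ closedNbhd G v ↔ G.Adj u v := by
      simp [closedNbhd, huv, SimpleGraph.adj_comm]
    rw [h1, hrep u v huv, Set.Icc_inter_Icc, Set.nonempty_Icc]


lemma emono (hmono : StrictMono e) {k k' : ℕ} (hk : k < N) (hk' : k' < N)
    (h : k ≤ k') : e ⟨k, hk⟩ ≤ e ⟨k', hk'⟩ :=
  hmono.monotone (by exact h)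

lemma emono_lt (hmono : StrictMono e) {k k' : ℕ} (hk : k < N) (hk' : k' < N)
    (h : k < k') : e ⟨k, hk⟩ < e ⟨k', hk'⟩ :=
  hmono (by exact h)

lemma legal_length_le
    (hab : ∀ v, a v ≤ b v)
    (hrep : ∀ u v : V, u ≠ v →
      (G.Adj u v ↔ (Set.Icc (a u) (b u) ∩ Set.Icc (a v) (b v)).Nonempty))
    (hd : ∀ i j : V, a i ≠ b j)
    (hmono : StrictMono e)
    (hrange : Set.range e = Set.range a ∪ Set.range b)
    (l : List V) (hl : IsLegalSeq G l) : l.length ≤ (lrSet a b e).card := by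
  classical
  obtain ⟨hnd, hleg⟩ := hl
  choose u hu1 hu2 using hleg
  have H : ∀ i : Fin l.length, ∃ k : Fin N, k ∈ lrSet a b e ∧
      a (l.get i) ≤ e k ∧ a (u i) ≤ e k ∧ e k ≤ b (l.get i) ∧ e k ≤ b (u i) := by
    intro i
    have hmm : max (a (u i)) (a (l.get i)) ≤ min (b (u i)) (b (l.get i)) :=
      (mem_closedNbhd_iff hab hrep).1 (hu1 i)
    have hmaxL : ∃ w, a w = max (a (u i)) (a (l.get i)) := by
      rcases max_choice (a (u i)) (a (l.get i)) with h | h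
      · exact ⟨u i, h.symm⟩
      · exact ⟨l.get i, h.symm⟩
    have hminR : ∃ z, b z = min (b (u i)) (b (l.get i)) := by
      rcases min_choice (b (u i)) (b (l.get i)) with h | h
      · exact ⟨u i, h.symm⟩
      · exact ⟨l.get i, h.symm⟩
    obtain ⟨w, hw⟩ := hmaxL
    obtain ⟨z, hz⟩ := hminR
    obtain ⟨p, hp⟩ := exists_idx (a := a) (b := b) hrange (Or.inl ⟨w, rfl⟩ : a w ∈ _)
    obtain ⟨q, hq⟩ := exists_idx (a := a) (b := b) hrange (Or.inr ⟨z, rfl⟩ : b z ∈ _)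
    have hpq : (p : ℕ) < (q : ℕ) := by
      have h1 : e p ≤ e q := by rw [hp, hq, hw, hz]; exact hmm
      have h2 : e p ≠ e q := by rw [hp, hq]; exact hd w z
      exact hmono.lt_iff_lt.1 (lt_of_le_of_ne h1 h2)
    obtain ⟨k, hpk, hk1q, hkL, hkR⟩ := gap hrange hd (isLeft_of_eq hp.symm)
      (isLeft_of_eq hq.symm) hpq
    have hkN : k < N := lt_of_lt_of_le (Nat.lt_succ_self k) (le_trans hk1q (le_of_lt q.isLt))
    refine ⟨⟨k, hkN⟩, ?_, ?_, ?_, ?_, ?_⟩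
    · rw [mem_lrSet]; exact ⟨hkL, hkR⟩
    all_goals {
      have hpe : e p ≤ e ⟨k, hkN⟩ := by
        rw [show p = (⟨(p : ℕ), p.isLt⟩ : Fin N) from (Fin.eta p p.isLt).symm]
        exact emono hmono _ _ hpk
      have hqe : e ⟨k, hkN⟩ ≤ e q := by
        rw [show q = (⟨(q : ℕ), q.isLt⟩ : Fin N) from (Fin.eta q q.isLt).symm]
        exact emono hmono _ _ (le_of_lt (lt_of_lt_of_le (Nat.lt_succ_self k) hk1q))
      rw [hp, hw] at hpe
      rw [hq, hz] at hqe
      first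
        | exact le_trans (le_max_right _ _) hpe
        | exact le_trans (le_max_left _ _) hpe
        | exact le_trans hqe (min_le_right _ _)
        | exact le_trans hqe (min_le_left _ _) }
  choose k hkmem hk1 hk2 hk3 hk4 using H
  have hinj : Function.Injective (fun i => (⟨k i, hkmem i⟩ : {x // x ∈ lrSet a b e})) := by
    intro i i' hii
    have hkk : k i = k i' := by simpa using hii
    by_contra hne
    rcases lt_or_gt_of_ne (fun h : i = i' => hne h) with hlt | hgt
    · have hnot := hu2 i' i (by exact_mod_cast hlt)
      have h1 : max (a (u i')) (a (l.get i)) ≤ e (k i) :=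
        max_le (hkk ▸ hk2 i') (hk1 i)
      have h2 : e (k i) ≤ min (b (u i')) (b (l.get i)) :=
        le_min (hkk ▸ hk4 i') (hk3 i)
      exact hnot ((mem_closedNbhd_iff hab hrep).2 (h1.trans h2))
    · have hnot := hu2 i i' (by exact_mod_cast hgt)
      have h1 : max (a (u i)) (a (l.get i')) ≤ e (k i) :=
        max_le (hk2 i) (hkk ▸ hk1 i')
      have h2 : e (k i) ≤ min (b (u i)) (b (l.get i')) :=
        le_min (hk4 i) (hkk ▸ hk3 i')
      exact hnot ((mem_closedNbhd_iff hab hrep).2 (h1.trans h2))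
  have := Fintype.card_le_of_injective _ hinj
  simpa [Fintype.card_coe] using this


noncomputable def vtx (a : V → ℝ) (e : Fin N → ℝ) (k : ℕ) (h : IsLeft a e k) : V :=
  h.choose_spec.choose

lemma vtx_spec {k : ℕ} (h : IsLeft a e k) (hk : k < N) :
    a (vtx a e k h) = e ⟨k, hk⟩ := h.choose_spec.choose_spec

lemma exists_dom_seq
    (hab : ∀ v, a v ≤ b v)
    (hrep : ∀ u v : V, u ≠ v →
      (G.Adj u v ↔ (Set.Icc (a u) (b u) ∩ Set.Icc (a v) (b v)).Nonempty))
    (hd : ∀ i j : V, a i ≠ b j)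
    (hmono : StrictMono e)
    (hrange : Set.range e = Set.range a ∪ Set.range b) :
    ∃ l : List V, (IsLegalSeq G l ∧ ∀ x : V, ∃ v ∈ l, x ∈ closedNbhd G v) ∧
      l.length = (lrSet a b e).card := by
  classical
  set t : List (Fin N) := ((lrSet a b e).sort (· ≤ ·)).reverse with ht
  have htmem : ∀ x ∈ t, x ∈ lrSet a b e := by
    intro x hx; rw [ht, List.mem_reverse, Finset.mem_sort] at hx; exact hx
  have HT : ∀ x ∈ t, IsLeft a e ↑x := fun x hx => (mem_lrSet.1 (htmem x hx)).1
  refine ⟨t.pmap (fun (x : Fin N) (hx : IsLeft a e ↑x) => vtx a e ↑x hx) HT, ⟨⟨?_, ?_⟩, ?_⟩, ?_⟩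
  · -- Nodup
    refine List.Nodup.pmap ?_ (List.nodup_reverse.2 (Finset.sort_nodup _ _))
    intro x hx y hy hxy
    have h1 : a (vtx a e ↑x hx) = e ⟨↑x, x.isLt⟩ := vtx_spec hx x.isLt
    have h2 : a (vtx a e ↑y hy) = e ⟨↑y, y.isLt⟩ := vtx_spec hy y.isLt
    have : e x = e y := by
      rw [show e x = e ⟨↑x, x.isLt⟩ from rfl, show e y = e ⟨↑y, y.isLt⟩ from rfl,
        ← h1, ← h2, hxy]
    exact hmono.injective this
  · -- legality
    intro i
    have hlt : (t.pmap (fun (x : Fin N) (hx : IsLeft a e ↑x) => vtx a e ↑x hx) HT).length = t.length :=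
      List.length_pmap
    have hsort : ∀ i j : Fin t.length, i < j → t.get j < t.get i := by
      have hs : List.Pairwise (fun x y => y < x) t :=
        List.pairwise_reverse.2 (Finset.sortedLT_sort _).pairwise
      intro i j hij
      exact hs.rel_get_of_lt hij
    obtain ⟨n, hn⟩ := i
    set K : Fin N := t.get ⟨n, hlt ▸ hn⟩ with hK
    have hKt : K ∈ t := t.get_mem _
    have hKmem : K ∈ lrSet a b e := htmem _ hKt
    have hKr : IsLeft b e (↑K + 1) := (mem_lrSet.1 hKmem).2
    have hk1N : (↑K : ℕ) + 1 < N := hKr.choose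
    set u : V := vtx b e (↑K + 1) hKr with hu
    have hbu : b u = e ⟨↑K + 1, hk1N⟩ := vtx_spec hKr hk1N
    have hgetn : (t.pmap (fun (x : Fin N) (hx : IsLeft a e ↑x) => vtx a e ↑x hx) HT).get ⟨n, hn⟩
        = vtx a e ↑K (HT K hKt) := List.getElem_pmap _ _ _
    have haw : a (vtx a e ↑K (HT K hKt)) = e ⟨↑K, K.isLt⟩ := vtx_spec _ _
    -- a u ≤ e K
    obtain ⟨r, hr⟩ := exists_idx (a := a) (b := b) hrange (Or.inl ⟨u, rfl⟩ : a u ∈ _)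
    have haub : a u < b u := lt_of_le_of_ne (hab u) (hd u u)
    have hrlt : e r < e ⟨↑K + 1, hk1N⟩ := by rw [hr, ← hbu]; exact haub
    have hrK : (r : ℕ) ≤ ↑K := by
      have := hmono.lt_iff_lt.1 hrlt
      exact Nat.lt_succ_iff.1 (by exact_mod_cast this)
    have hauK : a u ≤ e ⟨↑K, K.isLt⟩ := by
      rw [← hr]; exact emono hmono r.isLt K.isLt hrK
    refine ⟨u, ?_, ?_⟩
    · rw [hgetn, mem_closedNbhd_iff hab hrep]
      refine le_trans (max_le hauK (le_of_eq haw)) (le_min ?_ ?_)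
      · rw [hbu]; exact le_of_lt (emono_lt hmono _ _ (Nat.lt_succ_self _))
      · rw [← haw]; exact hab _
    · -- earlier vertices don't dominate u
      rintro ⟨m, hm⟩ hmn
      simp only at hmn
      set K' : Fin N := t.get ⟨m, hlt ▸ hm⟩ with hK'
      have hK't : K' ∈ t := t.get_mem _
      have hgetm : (t.pmap (fun (x : Fin N) (hx : IsLeft a e ↑x) => vtx a e ↑x hx) HT).get ⟨m, hm⟩
          = vtx a e ↑K' (HT K' hK't) := List.getElem_pmap _ _ _
      have haw' : a (vtx a e ↑K' (HT K' hK't)) = e ⟨↑K', K'.isLt⟩ := vtx_spec _ _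
      have hKK' : K < K' := hsort ⟨m, hlt ▸ hm⟩ ⟨n, hlt ▸ hn⟩ (by exact hmn)
      have hne2 : (↑K' : ℕ) ≠ ↑K + 1 := by
        intro hcontra
        have hL : IsLeft a e ((↑K : ℕ) + 1) := hcontra ▸ (mem_lrSet.1 (htmem K' hK't)).1
        exact not_left_and_right hd ⟨hL, hKr⟩
      have hKlt : (↑K : ℕ) + 1 < ↑K' := lt_of_le_of_ne hKK' (Ne.symm hne2)
      have hblt : b u < a (vtx a e ↑K' (HT K' hK't)) := by
        rw [hbu, haw']; exact emono_lt hmono _ _ hKlt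
      rw [hgetm, mem_closedNbhd_iff hab hrep]
      intro hcon
      have : a (vtx a e ↑K' (HT K' hK't)) ≤ b u :=
        le_trans (le_max_right _ _) (hcon.trans (min_le_left _ _))
      linarith
  · -- domination
    intro x
    obtain ⟨p, hp⟩ := exists_idx (a := a) (b := b) hrange (Or.inl ⟨x, rfl⟩ : a x ∈ _)
    obtain ⟨q, hq⟩ := exists_idx (a := a) (b := b) hrange (Or.inr ⟨x, rfl⟩ : b x ∈ _)
    have hpq : (p : ℕ) < (q : ℕ) := by
      have : e p < e q := by rw [hp, hq]; exact lt_of_le_of_ne (hab x) (hd x x)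
      exact_mod_cast hmono.lt_iff_lt.1 this
    obtain ⟨k, hpk, hk1q, hkL, hkR⟩ := gap hrange hd (isLeft_of_eq hp.symm)
      (isLeft_of_eq hq.symm) hpq
    have hkN : k < N := lt_of_lt_of_le (Nat.lt_succ_self k) (le_trans hk1q (le_of_lt q.isLt))
    have hKmem : (⟨k, hkN⟩ : Fin N) ∈ lrSet a b e := mem_lrSet.2 ⟨hkL, hkR⟩
    have hKt : (⟨k, hkN⟩ : Fin N) ∈ t := by
      rw [ht, List.mem_reverse, Finset.mem_sort]; exact hKmem
    refine ⟨vtx a e k hkL, List.mem_pmap.2 ⟨⟨k, hkN⟩, hKt, rfl⟩, ?_⟩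
    rw [mem_closedNbhd_iff hab hrep]
    have haw : a (vtx a e k hkL) = e ⟨k, hkN⟩ := vtx_spec _ _
    have hk1N : k + 1 < N := lt_of_le_of_lt hk1q q.isLt
    refine le_trans (max_le ?_ (le_of_eq haw)) (le_min ?_ ?_)
    · rw [← hp]; exact emono hmono p.isLt hkN hpk
    · rw [← hq]
      calc e ⟨k, hkN⟩ ≤ e ⟨k + 1, hk1N⟩ := le_of_lt (emono_lt hmono _ _ (Nat.lt_succ_self _))
        _ ≤ e ⟨↑q, q.isLt⟩ := emono hmono _ _ hk1q
        _ = e q := rfl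
    · rw [← haw]; exact hab _
  · rw [List.length_pmap, ht, List.length_reverse, Finset.length_sort]

end GrundyAux

theorem grundy_interval_graph (V : Type*) [Fintype V] (G : SimpleGraph V)
    (a b : V → ℝ) (hab : ∀ v, a v ≤ b v)
    (hrep : ∀ u v : V, u ≠ v →
      (G.Adj u v ↔ (Set.Icc (a u) (b u) ∩ Set.Icc (a v) (b v)).Nonempty))
    (hdistinct : Function.Injective (Sum.elim a b : V ⊕ V → ℝ))
    (e : Fin (2 * Fintype.card V) → ℝ)
    (hmono : StrictMono e)
    (hrange : Set.range e = Set.range a ∪ Set.range b) :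
    grundyDomNum G =
      Nat.card {k : Fin (2 * Fintype.card V) //
        ∃ hk : (k : ℕ) + 1 < 2 * Fintype.card V,
          (∃ i : V, a i = e k) ∧ (∃ j : V, b j = e ⟨(k : ℕ) + 1, hk⟩)} := by
  classical
  have hd : ∀ i j : V, a i ≠ b j := GrundyAux.ab_ne hdistinct
  have hcard : Nat.card {k : Fin (2 * Fintype.card V) //
        ∃ hk : (k : ℕ) + 1 < 2 * Fintype.card V,
          (∃ i : V, a i = e k) ∧ (∃ j : V, b j = e ⟨(k : ℕ) + 1, hk⟩)}
      = (GrundyAux.lrSet a b e).card := by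
    have hiff : ∀ k : Fin (2 * Fintype.card V),
        (∃ hk : (k : ℕ) + 1 < 2 * Fintype.card V,
          (∃ i : V, a i = e k) ∧ (∃ j : V, b j = e ⟨(k : ℕ) + 1, hk⟩)) ↔
        k ∈ GrundyAux.lrSet a b e := by
      intro k
      rw [GrundyAux.mem_lrSet]
      constructor
      · rintro ⟨hk, ⟨i, hi⟩, ⟨j, hj⟩⟩
        exact ⟨⟨k.isLt, i, hi⟩, ⟨hk, j, hj⟩⟩
      · rintro ⟨⟨h1, i, hi⟩, ⟨h2, j, hj⟩⟩
        exact ⟨h2, ⟨i, hi⟩, ⟨j, hj⟩⟩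
    rw [Nat.card_congr (Equiv.subtypeEquivRight hiff), Nat.card_eq_fintype_card,
      Fintype.card_coe]
  rw [hcard, grundyDomNum]
  obtain ⟨l0, ⟨hleg0, hdom0⟩, hlen0⟩ := GrundyAux.exists_dom_seq hab hrep hd hmono hrange
  have hmem : (GrundyAux.lrSet a b e).card ∈
      {k : ℕ | ∃ l : List V, IsDomSeq G l ∧ l.length = k} := ⟨l0, ⟨hleg0, hdom0⟩, hlen0⟩
  have hbdd : ∀ x ∈ {k : ℕ | ∃ l : List V, IsDomSeq G l ∧ l.length = k},
      x ≤ (GrundyAux.lrSet a b e).card := by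
    rintro x ⟨l, ⟨hlegal, _⟩, rfl⟩
    exact GrundyAux.legal_length_le hab hrep hd hmono hrange l hlegal
  exact le_antisymm (csSup_le ⟨_, hmem⟩ hbdd) (le_csSup ⟨_, hbdd⟩ hmem)
end
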